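/- Let Q be a nondegenerate quadratic form on V, let N ∈ 𝓜̃_Q with N ≠ 0, let e := e_N, and let E be any subspace of V with V = E ⊕ ker N^{e−1}. Then: (1) the linear map E^{⊕e} → V, (v_0, v_1, …, v_{e−1}) ↦ v_0 + Nv_1 + ⋯ + N^{e−1}v_{e−1}, is injective; (2) the bilinear form ⟨,⟩ is nondegenerate on its image W := E + NE + ⋯ + N^{e−1}E; (3) V = W ⊕ W^⊥, R ⊆ W^⊥, W^⊥ is N-stable, and N^{e−1}(W^⊥) = 0. -/

import Mathlib

open QuadraticMap

variable {k V : Type*}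

/-- The perpendicular of a set `S ⊆ V` with respect to the bilinear form
`⟨x,y⟩ = Q(x+y) - Q x - Q y` associated to a quadratic form `Q`. -/
def perp [Field k] [AddCommGroup V] [Module k V] (Q : QuadraticForm k V) (S : Set V) :
    Submodule k V where
  carrier := {x | ∀ y ∈ S, polar Q x y = 0}
  add_mem' := by
    intro a b ha hb y hy
    rw [polar_add_left, ha y hy, hb y hy, add_zero]
  zero_mem' := by
    intro y hy
    simp [polar]
  smul_mem' := by
    intro c a ha y hy
    rw [polar_smul_left, ha y hy, smul_zero]

/-- The radical `R = {x ∈ V : ⟨x, V⟩ = 0}` of the bilinear form associated to `Q`. -/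
def rad [Field k] [AddCommGroup V] [Module k V] (Q : QuadraticForm k V) : Submodule k V :=
  perp Q Set.univ

/-- `Q` is nondegenerate: its restriction to the radical of the associated bilinear
form is injective. -/
def QNondeg [Field k] [AddCommGroup V] [Module k V] (Q : QuadraticForm k V) : Prop :=
  Set.InjOn Q (rad Q : Set V)

/-- `𝓜̃_Q`: the set of nilpotent endomorphisms `N` with `Q(Nx) = -⟨x, Nx⟩` for all `x`
(equivalently, `1 + N` is a unipotent element of the orthogonal group `O_Q`). -/
def Mtilde [Field k] [AddCommGroup V] [Module k V] (Q : QuadraticForm k V) :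
    Set (Module.End k V) :=
  {N | IsNilpotent N ∧ ∀ x, Q (N x) = - polar Q x (N x)}

/-- for `N ∈ 𝓜̃_Q`, `N ≠ 0`, `e = e_N` and `E` a complement of
`ker N^{e-1}` in `V`: (1) `(v_0,…,v_{e-1}) ↦ v_0 + Nv_1 + ⋯ + N^{e-1}v_{e-1}` is
injective on `E^{⊕e}`; (2) `⟨,⟩` is nondegenerate on `W = E + NE + ⋯ + N^{e-1}E`;
(3) `V = W ⊕ W^⊥`, `R ⊆ W^⊥`, `W^⊥` is `N`-stable and `N^{e-1}(W^⊥) = 0`. -/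
theorem stmt12 [Field k] [AddCommGroup V] [Module k V] [FiniteDimensional k V]
    (Q : QuadraticForm k V) (hQ : QNondeg Q) (N : Module.End k V) (hN : N ∈ Mtilde Q)
    (hN0 : N ≠ 0) (e : ℕ) (he : N ^ e = 0) (he' : N ^ (e - 1) ≠ 0)
    (E : Submodule k V) (hE : IsCompl E (LinearMap.ker (N ^ (e - 1)))) :
    Function.Injective (fun v : Fin e → E => ∑ i : Fin e, (N ^ (i : ℕ)) (v i : V)) ∧
    (∀ x ∈ ⨆ i : Fin e, Submodule.map (N ^ (i : ℕ)) E,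
      (∀ y ∈ ⨆ i : Fin e, Submodule.map (N ^ (i : ℕ)) E,
          QuadraticMap.polar Q x y = 0) → x = 0) ∧
    IsCompl (⨆ i : Fin e, Submodule.map (N ^ (i : ℕ)) E)
      (perp Q ((⨆ i : Fin e, Submodule.map (N ^ (i : ℕ)) E : Submodule k V) : Set V)) ∧
    rad Q ≤ perp Q ((⨆ i : Fin e, Submodule.map (N ^ (i : ℕ)) E : Submodule k V) : Set V) ∧
    (∀ x ∈ perp Q ((⨆ i : Fin e, Submodule.map (N ^ (i : ℕ)) E : Submodule k V) : Set V),
      N x ∈ perp Q ((⨆ i : Fin e, Submodule.map (N ^ (i : ℕ)) E : Submodule k V) : Set V)) ∧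
    (∀ x ∈ perp Q ((⨆ i : Fin e, Submodule.map (N ^ (i : ℕ)) E : Submodule k V) : Set V),
      (N ^ (e - 1)) x = 0) := by
  obtain ⟨-, hq⟩ := hN
  have he2 : 2 ≤ e := by
    rcases e with _ | e
    · exact absurd he he'
    · rcases e with _ | e
      · rw [pow_one] at he; exact absurd he hN0
      · omega
  -- the isometry `g = 1 + N`, its inverse `ginv`, and the twisted operator `M = N * ginv`
  set g : Module.End k V := 1 + N with hg
  set ginv : Module.End k V := ∑ i ∈ Finset.range e, (-N) ^ i with hginv
  have hNe : (-N) ^ e = 0 := by rw [neg_pow, he, mul_zero]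
  have hs : (-N - 1 : Module.End k V) = -(1 + N) := by abel
  have hgg : g * ginv = 1 := by
    have h := mul_geom_sum (-N) e
    rw [hNe, hs, neg_mul, zero_sub] at h
    exact neg_injective h
  have hgg' : ginv * g = 1 := by
    have h := geom_sum_mul (-N) e
    rw [hNe, hs, mul_neg, zero_sub] at h
    exact neg_injective h
  have hcomm : Commute N ginv :=
    Commute.sum_right _ _ _ fun i _ => ((Commute.refl N).neg_right).pow_right i
  set M : Module.End k V := N * ginv with hM
  have hNle : ∀ m, e ≤ m → N ^ m = 0 := by
    intro m hm
    rw [show m = e + (m - e) from by omega, pow_add, he, zero_mul]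
  -- basic quadratic identities
  have hQg : ∀ x, Q (x + N x) = Q x := by
    intro x
    have h := hq x
    simp only [polar] at h
    linear_combination h
  have key : ∀ x y, polar Q (x + N x) (y + N y) = polar Q x y := by
    intro x y
    simp only [polar]
    rw [show x + N x + (y + N y) = (x + y) + N (x + y) from by rw [map_add]; abel,
      hQg, hQg, hQg]
  have key2 : ∀ x y, polar Q (N x) (y + N y) = - polar Q x (N y) := by
    intro x y
    have h := key x y
    rw [polar_add_left, polar_add_right Q x y (N y), polar_add_right Q (N x) y (N y)] at h
    rw [polar_add_right]
    linear_combination h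
  have hgapp : ∀ y : V, ginv y + N (ginv y) = y := by
    intro y
    conv_rhs => rw [← Module.End.one_apply (R := k) (M := V) y, ← hgg]
    rw [Module.End.mul_apply, hg, LinearMap.add_apply, Module.End.one_apply]
  have adjN : ∀ x y, polar Q (N x) y = - polar Q x (M y) := by
    intro x y
    have h := key2 x (ginv y)
    rw [hgapp y] at h
    rw [hM, Module.End.mul_apply]
    exact h
  have adjM : ∀ x y, polar Q (M x) y = - polar Q x (N y) := by
    intro x y
    have h := adjN y x
    rw [polar_comm Q (M x) y, polar_comm Q x (N y)]
    linear_combination h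
  have adjNpow : ∀ (a : ℕ) (x y : V),
      polar Q ((N ^ a) x) y = (-1 : k) ^ a * polar Q x ((M ^ a) y) := by
    intro a
    induction a with
    | zero => intro x y; simp
    | succ n ih =>
      intro x y
      rw [pow_succ', Module.End.mul_apply, adjN, ih, ← Module.End.mul_apply, ← pow_succ]
      ring
  have adjMpow : ∀ (a : ℕ) (x y : V),
      polar Q ((M ^ a) x) y = (-1 : k) ^ a * polar Q x ((N ^ a) y) := by
    intro a
    induction a with
    | zero => intro x y; simp
    | succ n ih =>
      intro x y
      rw [pow_succ', Module.End.mul_apply, adjM, ih, ← Module.End.mul_apply, ← pow_succ]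
      ring
  have hMaNb : ∀ a b : ℕ, M ^ a * N ^ b = ginv ^ a * N ^ (a + b) := by
    intro a b
    rw [hM, hcomm.mul_pow, (hcomm.pow_pow a a).eq, mul_assoc, ← pow_add]
  have hradN : ∀ w : V, N w ∈ rad Q → N w = 0 := by
    intro w hw
    have h0 : (0 : V) ∈ rad Q := Submodule.zero_mem _
    refine hQ hw h0 ?_
    rw [map_zero, hq w, polar_comm]
    exact neg_eq_zero.mpr (hw w (Set.mem_univ w))
  -- the subspace W and its description
  set W : Submodule k V := ⨆ i : Fin e, Submodule.map (N ^ (i : ℕ)) E with hWdef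
  have hWmem : ∀ (i : Fin e) (u : V), u ∈ E → (N ^ (i : ℕ)) u ∈ W :=
    fun i u hu => Submodule.mem_iSup_of_mem i ⟨u, hu, rfl⟩
  set Φ : (Fin e → E) →ₗ[k] V :=
    ∑ i : Fin e, (N ^ (i : ℕ)) ∘ₗ (E.subtype ∘ₗ LinearMap.proj i) with hΦ
  have hΦapp : ∀ v : Fin e → E, Φ v = ∑ i : Fin e, (N ^ (i : ℕ)) (v i : V) := by
    intro v
    rw [hΦ, LinearMap.sum_apply]
    rfl
  have hΦrange : W = LinearMap.range Φ := by
    apply le_antisymm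
    · rw [hWdef]
      refine iSup_le fun i => ?_
      rintro x ⟨u, hu, rfl⟩
      refine ⟨Pi.single i ⟨u, hu⟩, ?_⟩
      rw [hΦapp, Finset.sum_eq_single i]
      · simp
      · intro j _ hj
        rw [Pi.single_eq_of_ne hj]
        simp
      · simp
    · rintro x ⟨v, rfl⟩
      rw [hΦapp]
      exact Submodule.sum_mem _ fun i _ => hWmem i _ (v i).2
  have hWdec : ∀ x ∈ W, ∃ v : Fin e → E, x = ∑ i : Fin e, (N ^ (i : ℕ)) (v i : V) := by
    intro x hx
    rw [hΦrange] at hx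
    obtain ⟨v, hv⟩ := hx
    exact ⟨v, by rw [← hΦapp, hv]⟩
  -- (1) the core kernel computation
  have hker : ∀ v : Fin e → E, ∑ i : Fin e, (N ^ (i : ℕ)) (v i : V) = 0 → ∀ j : Fin e, v j = 0 := by
    intro v hv
    have H : ∀ n : ℕ, ∀ j : Fin e, (j : ℕ) = n → v j = 0 := by
      intro n
      induction n using Nat.strong_induction_on with
      | _ n ih =>
        intro j hj
        have hjlt : n < e := hj ▸ j.isLt
        have h1 : ∑ i : Fin e, (N ^ (e - 1 - n)) ((N ^ (i : ℕ)) (v i : V)) = 0 := by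
          rw [← map_sum, hv, map_zero]
        have hsum : ∑ i : Fin e, (N ^ (e - 1 - n)) ((N ^ (i : ℕ)) (v i : V))
            = (N ^ (e - 1)) (v j : V) := by
          rw [Finset.sum_eq_single j]
          · rw [← Module.End.mul_apply, ← pow_add, hj, show e - 1 - n + n = e - 1 from by omega]
          · intro i _ hij
            rcases Nat.lt_or_ge (i : ℕ) n with hlt | hge
            · rw [ih (i : ℕ) hlt i rfl]; simp
            · have hgt : n < (i : ℕ) := lt_of_le_of_ne hge fun hc => hij (Fin.ext (by omega))
              rw [← Module.End.mul_apply, ← pow_add, hNle _ (by omega)]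
              simp
          · intro h; exact absurd (Finset.mem_univ j) h
        rw [hsum] at h1
        have hm : (v j : V) ∈ E ⊓ LinearMap.ker (N ^ (e - 1)) := ⟨(v j).2, h1⟩
        rw [hE.inf_eq_bot, Submodule.mem_bot] at hm
        exact Subtype.ext hm
    exact fun j => H (j : ℕ) j rfl
  have hinj : Function.Injective (fun v : Fin e → E => ∑ i : Fin e, (N ^ (i : ℕ)) (v i : V)) := by
    intro v v' hvv
    have hsub : ∑ i : Fin e, (N ^ (i : ℕ)) (((v - v') i : E) : V) = 0 := by
      have hterm : ∀ i : Fin e, (N ^ (i : ℕ)) (((v - v') i : E) : V)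
          = (N ^ (i : ℕ)) (v i : V) - (N ^ (i : ℕ)) (v' i : V) := by
        intro i
        rw [Pi.sub_apply, Submodule.coe_sub, _root_.map_sub]
      rw [Finset.sum_congr rfl fun i _ => hterm i, Finset.sum_sub_distrib, sub_eq_zero]
      exact hvv
    have hz := hker (v - v') hsub
    funext j
    have h := hz j
    rwa [Pi.sub_apply, sub_eq_zero] at h
  -- (2) nondegeneracy on W
  have hnd : ∀ x ∈ W, (∀ y ∈ W, polar Q x y = 0) → x = 0 := by
    intro x hx hperp
    obtain ⟨v, rfl⟩ := hWdec x hx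
    have H : ∀ n : ℕ, ∀ j : Fin e, (j : ℕ) = n → v j = 0 := by
      intro n
      induction n using Nat.strong_induction_on with
      | _ n ih =>
        intro j hj
        have hjlt : n < e := hj ▸ j.isLt
        have hz1 : (M ^ (e - 1 - n)) ((N ^ (j : ℕ)) (v j : V))
            = (ginv ^ (e - 1 - n)) ((N ^ (e - 1)) (v j : V)) := by
          rw [← Module.End.mul_apply, hMaNb, hj, show e - 1 - n + n = e - 1 from by omega,
            Module.End.mul_apply]
        have hz : (M ^ (e - 1 - n)) (∑ i : Fin e, (N ^ (i : ℕ)) (v i : V))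
            = (ginv ^ (e - 1 - n)) ((N ^ (e - 1)) (v j : V)) := by
          rw [map_sum, Finset.sum_eq_single j]
          · exact hz1
          · intro i _ hij
            rcases Nat.lt_or_ge (i : ℕ) n with hlt | hge
            · rw [ih (i : ℕ) hlt i rfl]; simp
            · have hgt : n < (i : ℕ) := lt_of_le_of_ne hge fun hc => hij (Fin.ext (by omega))
              rw [← Module.End.mul_apply, hMaNb, hNle (e - 1 - n + (i : ℕ)) (by omega), mul_zero]
              simp
          · intro h; exact absurd (Finset.mem_univ j) h
        have hzrad : (ginv ^ (e - 1 - n)) ((N ^ (e - 1)) (v j : V)) ∈ rad Q := fun y _ => by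
          have hy : y ∈ E ⊔ LinearMap.ker (N ^ (e - 1)) := by
            rw [hE.sup_eq_top]; exact Submodule.mem_top
          obtain ⟨u, hu, w, hw, rfl⟩ := Submodule.mem_sup.mp hy
          have hzu : polar Q ((ginv ^ (e - 1 - n)) ((N ^ (e - 1)) (v j : V))) u = 0 := by
            rw [← hz, adjMpow, hperp _ (hWmem ⟨e - 1 - n, by omega⟩ u hu), mul_zero]
          have hzw : polar Q ((ginv ^ (e - 1 - n)) ((N ^ (e - 1)) (v j : V))) w = 0 := by
            rw [← hz1, adjMpow, adjNpow]
            have h0 : (M ^ (j : ℕ)) ((N ^ (e - 1 - n)) w) = 0 := by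
              rw [← Module.End.mul_apply, hMaNb, hj, show n + (e - 1 - n) = e - 1 from by omega,
                Module.End.mul_apply, LinearMap.mem_ker.mp hw, map_zero]
            rw [h0]
            simp [polar]
          rw [polar_add_right, hzu, hzw, add_zero]
        have hz0 : (ginv ^ (e - 1 - n)) ((N ^ (e - 1)) (v j : V)) = 0 := by
          have hop : ginv ^ (e - 1 - n) * N ^ (e - 1)
              = N * (ginv ^ (e - 1 - n) * N ^ (e - 2)) := by
            rw [← mul_assoc, (hcomm.pow_right (e - 1 - n)).eq, mul_assoc, ← pow_succ',
              show (e - 2) + 1 = e - 1 from by omega]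
          have hform : (ginv ^ (e - 1 - n)) ((N ^ (e - 1)) (v j : V))
              = N ((ginv ^ (e - 1 - n)) ((N ^ (e - 2)) (v j : V))) := by
            rw [← Module.End.mul_apply, hop, Module.End.mul_apply, Module.End.mul_apply]
          rw [hform] at hzrad ⊢
          exact hradN _ hzrad
        have hNvj : (N ^ (e - 1)) (v j : V) = 0 := by
          have hgG : Commute g ginv := (Commute.one_left ginv).add_left hcomm
          have happ : (g ^ (e - 1 - n)) ((ginv ^ (e - 1 - n)) ((N ^ (e - 1)) (v j : V)))
              = (N ^ (e - 1)) (v j : V) := by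
            rw [← Module.End.mul_apply, ← hgG.mul_pow, hgg, one_pow, Module.End.one_apply]
          rw [hz0, map_zero] at happ
          exact happ.symm
        have hm : (v j : V) ∈ E ⊓ LinearMap.ker (N ^ (e - 1)) := ⟨(v j).2, hNvj⟩
        rw [hE.inf_eq_bot, Submodule.mem_bot] at hm
        exact Subtype.ext hm
    have hall : ∀ j : Fin e, v j = 0 := fun j => H (j : ℕ) j rfl
    simp [hall]
  -- stability of W under N, ginv, M
  have hWN : ∀ u ∈ W, N u ∈ W := by
    intro u hu
    obtain ⟨v, rfl⟩ := hWdec u hu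
    rw [map_sum]
    refine Submodule.sum_mem _ fun i _ => ?_
    rw [← Module.End.mul_apply, ← pow_succ']
    rcases Nat.lt_or_ge ((i : ℕ) + 1) e with h | h
    · exact hWmem ⟨(i : ℕ) + 1, h⟩ _ (v i).2
    · rw [hNle _ h]
      simp
  have hWNpow : ∀ (m : ℕ), ∀ u ∈ W, (N ^ m) u ∈ W := by
    intro m
    induction m with
    | zero => intro u hu; simpa using hu
    | succ n ih =>
      intro u hu
      rw [pow_succ', Module.End.mul_apply]
      exact hWN _ (ih u hu)
  have hWginv : ∀ u ∈ W, ginv u ∈ W := by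
    intro u hu
    rw [hginv, LinearMap.sum_apply]
    refine Submodule.sum_mem _ fun i _ => ?_
    rcases Nat.even_or_odd i with hp | hp
    · rw [hp.neg_pow]
      exact hWNpow i u hu
    · rw [hp.neg_pow, LinearMap.neg_apply]
      exact Submodule.neg_mem _ (hWNpow i u hu)
  have hWginvpow : ∀ (m : ℕ), ∀ u ∈ W, (ginv ^ m) u ∈ W := by
    intro m
    induction m with
    | zero => intro u hu; simpa using hu
    | succ n ih =>
      intro u hu
      rw [pow_succ', Module.End.mul_apply]
      exact hWginv _ (ih u hu)
  have hWM : ∀ u ∈ W, M u ∈ W := by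
    intro u hu
    rw [hM, Module.End.mul_apply]
    exact hWN _ (hWginv u hu)
  -- (3) the complement statement
  have hBrefl : (polarBilin Q).IsRefl := by
    intro x y h
    rw [polarBilin_apply_apply] at h ⊢
    rwa [polar_comm]
  have hBrest : (LinearMap.BilinForm.restrict (polarBilin Q) W).Nondegenerate := by
    refine (hBrefl.domRestrict W).nondegenerate_iff_separatingLeft.mpr ?_
    intro x hx
    have hx0 : (x : V) = 0 := by
      refine hnd x x.2 fun y hy => ?_
      exact hx ⟨y, hy⟩
    exact Subtype.ext hx0
  have hcompl : IsCompl W (LinearMap.BilinForm.orthogonal (polarBilin Q) W) :=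
    LinearMap.BilinForm.isCompl_orthogonal_of_restrict_nondegenerate hBrefl hBrest
  have hperpW : perp Q (W : Set V) = LinearMap.BilinForm.orthogonal (polarBilin Q) W := by
    ext x
    constructor
    · intro hx y hy
      show polarBilin Q y x = 0
      rw [polarBilin_apply_apply, polar_comm]
      exact hx y hy
    · intro hx y hy
      have h : polar Q y x = 0 := hx y hy
      rwa [polar_comm] at h
  have hstab : ∀ x ∈ perp Q (W : Set V), N x ∈ perp Q (W : Set V) := by
    intro x hx
    exact fun y hy => by rw [adjN, hx (M y) (hWM y hy), neg_zero]
  have hkill : ∀ x ∈ perp Q (W : Set V), (N ^ (e - 1)) x = 0 := by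
    intro x hx
    have hrad1 : (N ^ (e - 1)) x ∈ rad Q := fun y _ => by
      rw [adjNpow]
      have hMy : (M ^ (e - 1)) y ∈ W := by
        have hy : y ∈ E ⊔ LinearMap.ker (N ^ (e - 1)) := by
          rw [hE.sup_eq_top]; exact Submodule.mem_top
        obtain ⟨u, hu, w, hw, rfl⟩ := Submodule.mem_sup.mp hy
        have h1 : M ^ (e - 1) = ginv ^ (e - 1) * N ^ (e - 1) := by
          have h2 := hMaNb (e - 1) 0
          rwa [pow_zero, mul_one, add_zero] at h2
        have h3 : (M ^ (e - 1)) (u + w) = (ginv ^ (e - 1)) ((N ^ (e - 1)) u) := by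
          rw [h1, Module.End.mul_apply, map_add, LinearMap.mem_ker.mp hw, add_zero]
        rw [h3]
        exact hWginvpow (e - 1) _ (hWmem ⟨e - 1, by omega⟩ u hu)
      rw [hx _ hMy, mul_zero]
    have hform : (N ^ (e - 1)) x = N ((N ^ (e - 2)) x) := by
      rw [← Module.End.mul_apply, ← pow_succ', show (e - 2) + 1 = e - 1 from by omega]
    rw [hform] at hrad1 ⊢
    exact hradN _ hrad1
  refine ⟨hinj, hnd, ?_, ?_, hstab, hkill⟩
  · rw [hperpW]
    exact hcompl
  · intro x hx
    exact fun y _ => hx y (Set.mem_univ y)
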